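/- Let γ : [0,1] → ℝ² be a continuous injective curve that is positive (i.e., λ₂(γ([s,t])) > 0 whenever 0 ≤ s < t ≤ 1) and satisfies λ₂(γ([0,1])) = β. Then the function F : [0,1] → ℝ defined by F(t) = λ₂(γ([0,t])) is a strictly increasing continuous function mapping [0,1] onto [0,β]; in particular F is a homeomorphism from [0,1] onto [0,β]. -/

import Mathlib

open MeasureTheory Set Filter Topology

private lemma area_add (γ : ℝ → ℝ × ℝ)
    (hcont : ContinuousOn γ (Icc 0 1)) (hinj : InjOn γ (Icc 0 1))
    (s t : ℝ) (h0s : (0:ℝ) ≤ s) (hst : s ≤ t) (ht1 : t ≤ 1) :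
    volume (γ '' Icc 0 t) = volume (γ '' Icc 0 s) + volume (γ '' Icc s t) := by
  have hsub1 : Icc s t ⊆ Icc 0 1 := Icc_subset_Icc h0s ht1
  have hmeas : MeasurableSet (γ '' Icc s t) :=
    (isCompact_Icc.image_of_continuousOn (hcont.mono hsub1)).measurableSet
  have hunion : Icc 0 s ∪ Icc s t = Icc 0 t := Icc_union_Icc_eq_Icc h0s hst
  have hinter : γ '' Icc 0 s ∩ γ '' Icc s t = γ '' (Icc 0 s ∩ Icc s t) :=
    (hinj.image_inter (Icc_subset_Icc le_rfl (hst.trans ht1)) hsub1).symm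
  have h0 : volume (γ '' Icc 0 s ∩ γ '' Icc s t) = 0 := by
    rw [hinter, Icc_inter_Icc]
    simp only [max_eq_right h0s, min_eq_left hst, Icc_self, image_singleton]
    exact measure_singleton _
  calc volume (γ '' Icc 0 t) = volume (γ '' Icc 0 s ∪ γ '' Icc s t) := by
        rw [← image_union, hunion]
    _ = volume (γ '' Icc 0 s ∪ γ '' Icc s t) + volume (γ '' Icc 0 s ∩ γ '' Icc s t) := by
        rw [h0, add_zero]
    _ = volume (γ '' Icc 0 s) + volume (γ '' Icc s t) := measure_union_add_inter _ hmeas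

private lemma area_shrink (γ : ℝ → ℝ × ℝ)
    (hcont : ContinuousOn γ (Icc 0 1)) (hinj : InjOn γ (Icc 0 1))
    (hfin : volume (γ '' Icc 0 1) ≠ ⊤)
    (a : ℝ) (ha : a ∈ Icc (0:ℝ) 1) :
    Tendsto (fun n : ℕ => volume (γ '' Icc (max 0 (a - 1/(n+1))) (min 1 (a + 1/(n+1)))))
      atTop (𝓝 0) := by
  set l : ℕ → ℝ := fun n => max 0 (a - 1/(n+1)) with hl
  set r : ℕ → ℝ := fun n => min 1 (a + 1/(n+1)) with hr
  have hinv : ∀ n : ℕ, (0:ℝ) < 1/(n+1) := fun n => by positivity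
  have hinvmono : ∀ m n : ℕ, m ≤ n → (1:ℝ)/(n+1) ≤ 1/(m+1) := by
    intro m n hmn
    apply one_div_le_one_div_of_le (by positivity)
    have : (m:ℝ) ≤ n := Nat.cast_le.mpr hmn
    linarith
  have hsub : ∀ n, Icc (l n) (r n) ⊆ Icc (0:ℝ) 1 :=
    fun n => Icc_subset_Icc (le_max_left _ _) (min_le_left _ _)
  have hanti : Antitone (fun n => Icc (l n) (r n)) := by
    intro m n hmn
    apply Icc_subset_Icc
    · exact max_le_max le_rfl (by linarith [hinvmono m n hmn])
    · exact min_le_min le_rfl (by linarith [hinvmono m n hmn])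
  have hmem : ∀ n, a ∈ Icc (l n) (r n) := by
    intro n
    constructor
    · exact max_le ha.1 (by linarith [hinv n])
    · exact le_min ha.2 (by linarith [hinv n])
  have hiInter : ⋂ n, Icc (l n) (r n) = {a} := by
    apply Subset.antisymm
    · intro x hx
      simp only [mem_iInter, mem_Icc] at hx
      have htend : Tendsto (fun n : ℕ => (1:ℝ)/(n+1)) atTop (𝓝 0) :=
        tendsto_one_div_add_atTop_nhds_zero_nat
      have h1 : a ≤ x := by
        by_contra h
        push_neg at h
        obtain ⟨n, hn⟩ :=
          (htend.eventually (eventually_lt_nhds (show (0:ℝ) < a - x by linarith))).exists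
        have h' : max 0 (a - 1/(n+1)) ≤ x := (hx n).1
        have : a - 1/(n+1) ≤ x := le_trans (le_max_right _ _) h'
        linarith
      have h2 : x ≤ a := by
        by_contra h
        push_neg at h
        obtain ⟨n, hn⟩ :=
          (htend.eventually (eventually_lt_nhds (show (0:ℝ) < x - a by linarith))).exists
        have h' : x ≤ min 1 (a + 1/(n+1)) := (hx n).2
        have : x ≤ a + 1/(n+1) := le_trans h' (min_le_right _ _)
        linarith
      simp [le_antisymm h2 h1]
    · intro x hx
      simp only [mem_singleton_iff] at hx
      subst hx
      exact mem_iInter.mpr hmem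
  have hms : ∀ n, NullMeasurableSet (γ '' Icc (l n) (r n)) volume := fun n =>
    ((isCompact_Icc.image_of_continuousOn (hcont.mono (hsub n))).measurableSet).nullMeasurableSet
  have himanti : Antitone (fun n => γ '' Icc (l n) (r n)) :=
    fun m n hmn => image_mono (hanti hmn)
  have hfin' : ∃ n, volume (γ '' Icc (l n) (r n)) ≠ ⊤ :=
    ⟨0, fun h => hfin (top_le_iff.mp (h ▸ measure_mono (image_mono (hsub 0))))⟩
  have htm := tendsto_measure_iInter_atTop hms himanti hfin'
  have hIm : γ '' (⋂ n, Icc (l n) (r n)) = ⋂ n, γ '' Icc (l n) (r n) :=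
    InjOn.image_iInter_eq (hinj.mono (iUnion_subset hsub))
  rw [← hIm, hiInter] at htm
  simp only [image_singleton, measure_singleton] at htm
  exact htm

/-- For a positive continuous injective curve `γ` with `λ₂(γ([0,1])) = β`, the function
`F(t) = λ₂(γ([0,t]))` is a strictly increasing continuous map of `[0,1]` onto `[0,β]`. -/
theorem area_function_homeomorphism
    (γ : ℝ → ℝ × ℝ) (β : ℝ)
    (hcont : ContinuousOn γ (Icc 0 1)) (hinj : InjOn γ (Icc 0 1))
    (hpos : ∀ s t : ℝ, 0 ≤ s → s < t → t ≤ 1 → 0 < volume (γ '' Icc s t))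
    (harea : volume (γ '' Icc 0 1) = ENNReal.ofReal β) :
    StrictMonoOn (fun t : ℝ => (volume (γ '' Icc 0 t)).toReal) (Icc 0 1) ∧
    ContinuousOn (fun t : ℝ => (volume (γ '' Icc 0 t)).toReal) (Icc 0 1) ∧
    (fun t : ℝ => (volume (γ '' Icc 0 t)).toReal) '' Icc 0 1 = Icc 0 β := by
  set F : ℝ → ℝ := fun t : ℝ => (volume (γ '' Icc 0 t)).toReal with hFdef
  have hfin : volume (γ '' Icc 0 1) ≠ ⊤ := by rw [harea]; exact ENNReal.ofReal_ne_top
  have hfinst : ∀ s t : ℝ, 0 ≤ s → t ≤ 1 → volume (γ '' Icc s t) ≠ ⊤ := by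
    intro s t hs ht h
    exact hfin (top_le_iff.mp (h ▸ measure_mono (image_mono (Icc_subset_Icc hs ht))))
  -- key difference formula
  have hdiff : ∀ s t : ℝ, 0 ≤ s → s ≤ t → t ≤ 1 →
      F t = F s + (volume (γ '' Icc s t)).toReal := by
    intro s t hs hst ht
    have := area_add γ hcont hinj s t hs hst ht
    simp only [hFdef, this]
    exact ENNReal.toReal_add (hfinst 0 s le_rfl (hst.trans ht)) (hfinst s t hs ht)
  -- strict monotonicity
  have hsm : StrictMonoOn F (Icc 0 1) := by
    intro s hs t ht hst
    have h := hdiff s t hs.1 hst.le ht.2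
    have hp : 0 < (volume (γ '' Icc s t)).toReal :=
      ENNReal.toReal_pos (hpos s t hs.1 hst ht.2).ne' (hfinst s t hs.1 ht.2)
    rw [h]; linarith
  have hmono : MonotoneOn F (Icc 0 1) := hsm.monotoneOn
  -- continuity
  have hctn : ContinuousOn F (Icc 0 1) := by
    intro a ha
    rw [Metric.continuousWithinAt_iff]
    intro ε hε
    have hshrink := area_shrink γ hcont hinj hfin a ha
    have hev : ∀ᶠ n : ℕ in atTop,
        volume (γ '' Icc (max 0 (a - 1/(n+1))) (min 1 (a + 1/(n+1)))) < ENNReal.ofReal ε :=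
      hshrink.eventually_lt_const (ENNReal.ofReal_pos.mpr hε)
    obtain ⟨n, hn⟩ := hev.exists
    set L : ℝ := max 0 (a - 1/(n+1)) with hLdef
    set R : ℝ := min 1 (a + 1/(n+1)) with hRdef
    have hinv : (0:ℝ) < 1/(n+1) := by positivity
    have hL0 : 0 ≤ L := le_max_left _ _
    have hR1 : R ≤ 1 := min_le_left _ _
    have hLa : L ≤ a := max_le ha.1 (by linarith)
    have haR : a ≤ R := le_min ha.2 (by linarith)
    have hLR : L ≤ R := hLa.trans haR
    have hFR : F R = F L + (volume (γ '' Icc L R)).toReal := hdiff L R hL0 hLR hR1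
    have hlt : (volume (γ '' Icc L R)).toReal < ε := by
      exact ENNReal.toReal_lt_of_lt_ofReal hn
    refine ⟨1/(n+1), hinv, ?_⟩
    intro x hx hdx
    rw [Real.dist_eq] at hdx ⊢
    have hxd := abs_lt.mp hdx
    have hLx : L ≤ x := max_le hx.1 (by linarith [hxd.1])
    have hxR : x ≤ R := le_min hx.2 (by linarith [hxd.2])
    have h1 : F L ≤ F x := hmono ⟨hL0, hR1.trans' (hLx.trans hxR)⟩ hx hLx
    have h2 : F x ≤ F R := hmono hx ⟨hL0.trans hLR, hR1⟩ hxR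
    have h3 : F L ≤ F a := hmono ⟨hL0, hLR.trans hR1⟩ ha hLa
    have h4 : F a ≤ F R := hmono ha ⟨hL0.trans hLR, hR1⟩ haR
    rw [abs_lt]
    constructor <;> [linarith [hFR, hlt]; linarith [hFR, hlt]]
  -- endpoint values
  have hF0 : F 0 = 0 := by
    simp only [hFdef, Icc_self, image_singleton, measure_singleton, ENNReal.toReal_zero]
  have hβpos : 0 < β := ENNReal.ofReal_pos.mp (harea ▸ hpos 0 1 le_rfl one_pos le_rfl)
  have hF1 : F 1 = β := by
    simp only [hFdef, harea, ENNReal.toReal_ofReal hβpos.le]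
  have himg : F '' Icc 0 1 = Icc 0 β := by
    apply Subset.antisymm
    · rintro y ⟨x, hx, rfl⟩
      exact ⟨hF0 ▸ hmono (left_mem_Icc.mpr zero_le_one) hx hx.1,
        hF1 ▸ hmono hx (right_mem_Icc.mpr zero_le_one) hx.2⟩
    · have := intermediate_value_Icc (zero_le_one (α := ℝ)) hctn
      rwa [hF0, hF1] at this
  exact ⟨hsm, hctn, himg⟩
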